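/- Fix r₁ ∈ ℝ, θ ∈ (0, π), ω_0 ≥ 0 and w_∞ ∈ ℝ with ω_0² − w_∞² > 0, and let a, b, c, w : (r₁, ∞) → ℝ. Assume: a(r) ≠ 0, b(r)² − a(r) c(r) > 0 and ω_0² + w(r)² a(r) ≥ 0 for all r; and as r → ∞: a(r) → −1, b(r)/(r sin θ) → 0, (b(r)² − a(r) c(r))/(r² sin² θ) → 1, and w(r)² → w_∞². Define R_±(r) = ±(b(r)/a(r)) ω_0 + (1/a(r)) √(b(r)² − a(r) c(r)) √(ω_0² + w(r)² a(r)). Then, as r → ∞, R_±(r)/r → −sin θ · √(ω_0² − w_∞²) and R_±(r) → −∞ (for both choices of sign). -/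

import Mathlib

open Real Filter Topology Set

lemma aux13 (r₁ θ ω0 wi s : ℝ) (hθ : 0 < θ) (hθ' : θ < π)
    (hgap : 0 < ω0 ^ 2 - wi ^ 2)
    (a b c w : ℝ → ℝ)
    (hcond : ∀ r > r₁,
      a r ≠ 0 ∧ 0 < b r ^ 2 - a r * c r ∧ 0 ≤ ω0 ^ 2 + w r ^ 2 * a r)
    (ha : Tendsto a atTop (𝓝 (-1)))
    (hb : Tendsto (fun r => b r / (r * Real.sin θ)) atTop (𝓝 0))
    (hdet : Tendsto (fun r => (b r ^ 2 - a r * c r) / (r ^ 2 * Real.sin θ ^ 2))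
      atTop (𝓝 1))
    (hw : Tendsto (fun r => w r ^ 2) atTop (𝓝 (wi ^ 2)))
    (R : ℝ → ℝ)
    (hR : ∀ r, R r = s * (b r / a r) * ω0 +
      (1 / a r) * Real.sqrt (b r ^ 2 - a r * c r) * Real.sqrt (ω0 ^ 2 + w r ^ 2 * a r)) :
    Tendsto (fun r => R r / r) atTop (𝓝 (-(Real.sin θ * Real.sqrt (ω0 ^ 2 - wi ^ 2)))) ∧
    Tendsto R atTop atBot := by
  have hs : 0 < Real.sin θ := Real.sin_pos_of_pos_of_lt_pi hθ hθ'
  -- auxiliary limit function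
  have hainv : Tendsto (fun r => (a r)⁻¹) atTop (𝓝 (-1)) := by
    have := ha.inv₀ (by norm_num : (-1:ℝ) ≠ 0)
    simpa only [inv_neg, inv_one] using this
  have hX : Tendsto (fun r => Real.sqrt (ω0 ^ 2 + w r ^ 2 * a r)) atTop
      (𝓝 (Real.sqrt (ω0 ^ 2 - wi ^ 2))) := by
    have h1 : Tendsto (fun r => ω0 ^ 2 + w r ^ 2 * a r) atTop (𝓝 (ω0 ^ 2 - wi ^ 2)) := by
      have := (tendsto_const_nhds (x := ω0 ^ 2)).add (hw.mul ha)
      simpa [sub_eq_add_neg, mul_neg] using this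
    exact (Real.continuous_sqrt.tendsto _).comp h1
  have hD : Tendsto (fun r => Real.sqrt ((b r ^ 2 - a r * c r) / (r ^ 2 * Real.sin θ ^ 2)))
      atTop (𝓝 1) := by
    have := (Real.continuous_sqrt.tendsto (1:ℝ)).comp hdet
    simpa [Function.comp_def] using this
  set L := -(Real.sin θ * Real.sqrt (ω0 ^ 2 - wi ^ 2)) with hL
  have hg : Tendsto (fun r => s * (b r / (r * Real.sin θ)) * (Real.sin θ * ω0) * (a r)⁻¹ +
      (a r)⁻¹ * Real.sqrt ((b r ^ 2 - a r * c r) / (r ^ 2 * Real.sin θ ^ 2)) *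
        (Real.sin θ * Real.sqrt (ω0 ^ 2 + w r ^ 2 * a r))) atTop (𝓝 L) := by
    have h1 : Tendsto (fun r => s * (b r / (r * Real.sin θ)) * (Real.sin θ * ω0) * (a r)⁻¹)
        atTop (𝓝 0) := by
      have := (((tendsto_const_nhds (x := s)).mul hb).mul
        (tendsto_const_nhds (x := Real.sin θ * ω0))).mul hainv
      simpa using this
    have h2 : Tendsto (fun r => (a r)⁻¹ *
        Real.sqrt ((b r ^ 2 - a r * c r) / (r ^ 2 * Real.sin θ ^ 2)) *
        (Real.sin θ * Real.sqrt (ω0 ^ 2 + w r ^ 2 * a r))) atTop (𝓝 L) := by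
      have := (hainv.mul hD).mul ((tendsto_const_nhds (x := Real.sin θ)).mul hX)
      simpa [hL] using this
    simpa using h1.add h2
  have heq : (fun r =>
      s * (b r / (r * Real.sin θ)) * (Real.sin θ * ω0) * (a r)⁻¹ +
      (a r)⁻¹ * Real.sqrt ((b r ^ 2 - a r * c r) / (r ^ 2 * Real.sin θ ^ 2)) *
        (Real.sin θ * Real.sqrt (ω0 ^ 2 + w r ^ 2 * a r))) =ᶠ[atTop] fun r => R r / r := by
    filter_upwards [eventually_gt_atTop r₁, eventually_gt_atTop 0] with r hr hr0
    obtain ⟨ha0, hd0, hx0⟩ := hcond r hr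
    have hsq : Real.sqrt ((b r ^ 2 - a r * c r) / (r ^ 2 * Real.sin θ ^ 2)) =
        Real.sqrt (b r ^ 2 - a r * c r) / (r * Real.sin θ) := by
      rw [Real.sqrt_div hd0.le]
      congr 1
      have : r ^ 2 * Real.sin θ ^ 2 = (r * Real.sin θ) ^ 2 := by ring
      rw [this, Real.sqrt_sq (by positivity)]
    rw [hR, hsq]
    field_simp
  have hlim : Tendsto (fun r => R r / r) atTop (𝓝 L) := hg.congr' heq
  refine ⟨hlim, ?_⟩
  have hLneg : L < 0 := by
    have : 0 < Real.sqrt (ω0 ^ 2 - wi ^ 2) := Real.sqrt_pos.mpr hgap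
    simp only [hL, neg_neg, Left.neg_neg_iff]
    positivity
  have hbot : Tendsto (fun r => R r / r * r) atTop atBot :=
    hlim.neg_mul_atTop hLneg tendsto_id
  refine hbot.congr' ?_
  filter_upwards [eventually_gt_atTop 0] with r hr0
  exact div_mul_cancel₀ _ hr0.ne'

theorem stmt13 (r₁ θ ω0 wi : ℝ) (hθ : 0 < θ) (hθ' : θ < π) (hω0 : 0 ≤ ω0)
    (hgap : 0 < ω0 ^ 2 - wi ^ 2)
    (a b c w : ℝ → ℝ)
    (hcond : ∀ r > r₁,
      a r ≠ 0 ∧ 0 < b r ^ 2 - a r * c r ∧ 0 ≤ ω0 ^ 2 + w r ^ 2 * a r)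
    (ha : Tendsto a atTop (𝓝 (-1)))
    (hb : Tendsto (fun r => b r / (r * Real.sin θ)) atTop (𝓝 0))
    (hdet : Tendsto (fun r => (b r ^ 2 - a r * c r) / (r ^ 2 * Real.sin θ ^ 2))
      atTop (𝓝 1))
    (hw : Tendsto (fun r => w r ^ 2) atTop (𝓝 (wi ^ 2)))
    (Rp Rm : ℝ → ℝ)
    (hRp : ∀ r, Rp r = (b r / a r) * ω0 +
      (1 / a r) * Real.sqrt (b r ^ 2 - a r * c r) * Real.sqrt (ω0 ^ 2 + w r ^ 2 * a r))
    (hRm : ∀ r, Rm r = -(b r / a r) * ω0 +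
      (1 / a r) * Real.sqrt (b r ^ 2 - a r * c r) * Real.sqrt (ω0 ^ 2 + w r ^ 2 * a r)) :
    Tendsto (fun r => Rp r / r) atTop (𝓝 (-(Real.sin θ * Real.sqrt (ω0 ^ 2 - wi ^ 2)))) ∧
    Tendsto (fun r => Rm r / r) atTop (𝓝 (-(Real.sin θ * Real.sqrt (ω0 ^ 2 - wi ^ 2)))) ∧
    Tendsto Rp atTop atBot ∧ Tendsto Rm atTop atBot := by
  have hp := aux13 r₁ θ ω0 wi 1 hθ hθ' hgap a b c w hcond ha hb hdet hw Rp
    (by intro r; rw [hRp r]; ring)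
  have hm := aux13 r₁ θ ω0 wi (-1) hθ hθ' hgap a b c w hcond ha hb hdet hw Rm
    (by intro r; rw [hRm r]; ring)
  exact ⟨hp.1, hm.1, hp.2, hm.2⟩
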